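/- Let ξ1, ξ2 > 0, n1, n2 ≥ 2, N = n1 + n2, w1 = ξ2/ξ1. Let k ∈ (0, π) and λ = (4/ξ2)·sin²(k/2). With ψ̃_j(λ) = ξ2^j · det(M_{1:j} − λ·I) for the top-left j × j principal submatrices, A(k) = ψ̃_{n1}(λ) − w1·cos(k)·ψ̃_{n1−1}(λ) and B(k) = w1·ψ̃_{n1−1}(λ), the number λ is an eigenvalue of M if and only if A(k)·sin((n2+1)k) + B(k)·sin(k)·cos((n2+1)k) = 0. -/

import Mathlib

open Matrix Real

/-- The `(n1+n2) × (n1+n2)` two-segment tridiagonal matrix: row `i` (0-based) has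
diagonal entry `2/ξ1` and nonzero off-diagonal entries `-1/ξ1` when `i < n1`, and
diagonal entry `2/ξ2` and nonzero off-diagonal entries `-1/ξ2` when `n1 ≤ i`. -/
noncomputable def twoSegMatrix (ξ1 ξ2 : ℝ) (n1 n2 : ℕ) :
    Matrix (Fin (n1 + n2)) (Fin (n1 + n2)) ℝ :=
  Matrix.of fun i j =>
    if (i : ℕ) = (j : ℕ) then 2 / (if (i : ℕ) < n1 then ξ1 else ξ2)
    else if (i : ℕ) + 1 = (j : ℕ) ∨ (j : ℕ) + 1 = (i : ℕ) then
      -1 / (if (i : ℕ) < n1 then ξ1 else ξ2)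
    else 0

/-- `ξ^j · det(A_{1:j} − λ·I)` where `A_{1:j}` is the top-left `j × j` principal
submatrix of `A` (returns `0` for out-of-range `j`). -/
noncomputable def psiTop {N : ℕ} (A : Matrix (Fin N) (Fin N) ℝ) (ξ lam : ℝ) (j : ℕ) : ℝ :=
  if h : j ≤ N then
    ξ ^ j *
      (A.submatrix (Fin.castLE h) (Fin.castLE h) -
        lam • (1 : Matrix (Fin j) (Fin j) ℝ)).det
  else 0

lemma det_drop2 {n : ℕ} (A : Matrix (Fin (n + 2)) (Fin (n + 2)) ℝ)
    (hrow : ∀ j : Fin (n + 2), (j : ℕ) < n → A (Fin.last (n+1)) j = 0)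
    (hcol : ∀ i : Fin (n + 2), (i : ℕ) < n → A i (Fin.last (n+1)) = 0) :
    A.det = A (Fin.last (n+1)) (Fin.last (n+1)) *
        (A.submatrix (Fin.castLE (by omega) : Fin (n+1) → Fin (n+2)) (Fin.castLE (by omega))).det
      - A (Fin.last (n+1)) ⟨n, by omega⟩ * A ⟨n, by omega⟩ (Fin.last (n+1)) *
        (A.submatrix (Fin.castLE (by omega) : Fin n → Fin (n+2)) (Fin.castLE (by omega))).det := by
  have hlast : ((Fin.last (n+1) : Fin (n+2)) : ℕ) = n + 1 := rfl
  rw [Matrix.det_succ_row A (Fin.last (n+1))]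
  set f : Fin (n+2) → ℝ := fun j =>
    (-1 : ℝ) ^ ((Fin.last (n+1) : ℕ) + (j : ℕ)) * A (Fin.last (n+1)) j *
      (A.submatrix (Fin.last (n+1)).succAbove j.succAbove).det with hf
  have hne : (⟨n, by omega⟩ : Fin (n+2)) ≠ Fin.last (n+1) := by
    simp [Fin.ext_iff, Fin.last]
  have hzero : ∀ j ∈ Finset.univ, j ∉ ({⟨n, by omega⟩, Fin.last (n+1)} : Finset (Fin (n+2))) → f j = 0 := by
    intro j _ hj
    simp only [Finset.mem_insert, Finset.mem_singleton] at hj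
    push_neg at hj
    have hjn : (j : ℕ) < n := by
      have h1 : (j : ℕ) ≠ n := fun h => hj.1 (Fin.ext h)
      have h2 : (j : ℕ) ≠ n + 1 := fun h => hj.2 (Fin.ext h)
      omega
    simp [hf, hrow j hjn]
  rw [← Finset.sum_subset (Finset.subset_univ _) hzero, Finset.sum_pair hne]
  have esA : (Fin.last (n+1)).succAbove = (Fin.castLE (by omega : n+1 ≤ n+2)) := by
    funext i; rw [Fin.succAbove_last]; rfl
  -- the term at j = last
  have hterm2 : f (Fin.last (n+1)) = A (Fin.last (n+1)) (Fin.last (n+1)) *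
      (A.submatrix (Fin.castLE (by omega) : Fin (n+1) → Fin (n+2)) (Fin.castLE (by omega))).det := by
    have s1 : (-1:ℝ)^((Fin.last (n+1) : ℕ) + ((Fin.last (n+1) : Fin (n+2)) : ℕ)) = 1 := by
      rw [hlast, show (n+1)+(n+1) = 2*(n+1) from by ring, pow_mul]; norm_num
    rw [hf]; simp only [s1, one_mul, esA]
  -- the term at j = ⟨n⟩
  have hterm1 : f ⟨n, by omega⟩ = - (A (Fin.last (n+1)) ⟨n, by omega⟩ * A ⟨n, by omega⟩ (Fin.last (n+1)) *
      (A.submatrix (Fin.castLE (by omega) : Fin n → Fin (n+2)) (Fin.castLE (by omega))).det) := by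
    have s1 : (-1:ℝ)^((Fin.last (n+1) : ℕ) + ((⟨n, by omega⟩ : Fin (n+2)) : ℕ)) = -1 := by
      rw [hlast, show (n+1)+n = 2*n+1 from by ring, pow_succ, pow_mul]; norm_num
    have hB : (A.submatrix (Fin.last (n+1)).succAbove (⟨n, by omega⟩ : Fin (n+2)).succAbove).det
        = A ⟨n, by omega⟩ (Fin.last (n+1)) *
          (A.submatrix (Fin.castLE (by omega) : Fin n → Fin (n+2)) (Fin.castLE (by omega))).det := by
      set B := A.submatrix (Fin.last (n+1)).succAbove (⟨n, by omega⟩ : Fin (n+2)).succAbove with hBdef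
      rw [Matrix.det_succ_column B (Fin.last n)]
      have hcolB : ∀ i : Fin (n+1), i ≠ Fin.last n → B i (Fin.last n) = 0 := by
        intro i hi
        have h1 : ((⟨n, by omega⟩ : Fin (n+2)).succAbove (Fin.last n)) = Fin.last (n+1) := by
          simp [Fin.succAbove, Fin.lt_def, Fin.ext_iff]
        have hiv : (i : ℕ) < n := by
          have := i.isLt
          have : (i : ℕ) ≠ n := fun h => hi (Fin.ext h)
          omega
        rw [hBdef]
        simp only [Matrix.submatrix_apply, h1, esA]
        exact hcol _ (by simpa using hiv)
      rw [Finset.sum_eq_single (Fin.last n)]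
      · have h1 : ((⟨n, by omega⟩ : Fin (n+2)).succAbove (Fin.last n)) = Fin.last (n+1) := by
          simp [Fin.succAbove, Fin.lt_def, Fin.ext_iff]
        have s2 : (-1:ℝ)^(((Fin.last n : Fin (n+1)) : ℕ) + ((Fin.last n : Fin (n+1)) : ℕ)) = 1 := by
          rw [Fin.val_last, show n+n = 2*n from by ring, pow_mul]; norm_num
        have hBlast : B (Fin.last n) (Fin.last n) = A ⟨n, by omega⟩ (Fin.last (n+1)) := by
          rw [hBdef]; simp only [Matrix.submatrix_apply, h1, esA]; congr 1
        have hmin : B.submatrix (Fin.last n).succAbove (Fin.last n).succAbove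
            = A.submatrix (Fin.castLE (by omega) : Fin n → Fin (n+2)) (Fin.castLE (by omega)) := by
          rw [hBdef]
          ext i j
          simp only [Matrix.submatrix_apply, Fin.succAbove_last, esA]
          congr 1
          simp [Fin.succAbove, Fin.lt_def, j.isLt, Fin.ext_iff]
        rw [s2, hBlast, hmin, one_mul]
      · intro b _ hb
        rw [hcolB b hb]; ring
      · intro h; exact absurd (Finset.mem_univ _) h
    rw [hf]; simp only [s1, hB]; ring
  rw [hterm1, hterm2]; ring


lemma psiTop_of_le {N : ℕ} (A : Matrix (Fin N) (Fin N) ℝ) (ξ lam : ℝ) (j : ℕ) (h : j ≤ N) :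
    psiTop A ξ lam j = ξ ^ j *
      (A.submatrix (Fin.castLE h) (Fin.castLE h) -
        lam • (1 : Matrix (Fin j) (Fin j) ℝ)).det := by
  rw [psiTop, dif_pos h]

lemma psiTop_rec (ξ1 ξ2 lam : ℝ) (n1 n2 j : ℕ) (hj1 : n1 ≤ j + 1) (hj : j + 2 ≤ n1 + n2) :
    psiTop (twoSegMatrix ξ1 ξ2 n1 n2) ξ2 lam (j + 2) =
      (ξ2 * (2 / ξ2 - lam)) * psiTop (twoSegMatrix ξ1 ξ2 n1 n2) ξ2 lam (j + 1)
      - (ξ2 / ξ2) * (ξ2 / (if j < n1 then ξ1 else ξ2)) *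
          psiTop (twoSegMatrix ξ1 ξ2 n1 n2) ξ2 lam j := by
  set M := twoSegMatrix ξ1 ξ2 n1 n2 with hM
  set C : Matrix (Fin (j+2)) (Fin (j+2)) ℝ :=
    M.submatrix (Fin.castLE hj) (Fin.castLE hj) - lam • (1 : Matrix (Fin (j+2)) (Fin (j+2)) ℝ) with hC
  have hrow : ∀ i : Fin (j + 2), (i : ℕ) < j → C (Fin.last (j+1)) i = 0 := by
    intro i hi
    simp only [hC, Matrix.sub_apply, Matrix.smul_apply, Matrix.one_apply,
      Matrix.submatrix_apply, hM, twoSegMatrix, Matrix.of_apply, Fin.coe_castLE,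
      Fin.val_last, smul_eq_mul, Fin.ext_iff]
    split_ifs <;> first | ring1 | (exfalso; omega) | (exfalso; tauto)
  have hcol : ∀ i : Fin (j + 2), (i : ℕ) < j → C i (Fin.last (j+1)) = 0 := by
    intro i hi
    simp only [hC, Matrix.sub_apply, Matrix.smul_apply, Matrix.one_apply,
      Matrix.submatrix_apply, hM, twoSegMatrix, Matrix.of_apply, Fin.coe_castLE,
      Fin.val_last, smul_eq_mul, Fin.ext_iff]
    split_ifs <;> first | ring1 | (exfalso; omega) | (exfalso; tauto)
  have hdet := det_drop2 C hrow hcol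
  have hC22 : C (Fin.last (j+1)) (Fin.last (j+1)) = 2 / ξ2 - lam := by
    simp only [hC, Matrix.sub_apply, Matrix.smul_apply, Matrix.one_apply,
      Matrix.submatrix_apply, hM, twoSegMatrix, Matrix.of_apply, Fin.coe_castLE,
      Fin.val_last, smul_eq_mul, Fin.ext_iff]
    split_ifs <;> first | ring1 | (exfalso; omega) | (exfalso; tauto)
  have hC21 : C (Fin.last (j+1)) ⟨j, by omega⟩ = -1 / ξ2 := by
    simp only [hC, Matrix.sub_apply, Matrix.smul_apply, Matrix.one_apply,
      Matrix.submatrix_apply, hM, twoSegMatrix, Matrix.of_apply, Fin.coe_castLE,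
      Fin.val_last, smul_eq_mul, Fin.ext_iff]
    split_ifs <;> first | ring1 | (exfalso; omega) | (exfalso; tauto)
  have hC12 : C ⟨j, by omega⟩ (Fin.last (j+1)) = -1 / (if j < n1 then ξ1 else ξ2) := by
    simp only [hC, Matrix.sub_apply, Matrix.smul_apply, Matrix.one_apply,
      Matrix.submatrix_apply, hM, twoSegMatrix, Matrix.of_apply, Fin.coe_castLE,
      Fin.val_last, smul_eq_mul, Fin.ext_iff]
    split_ifs <;> first | ring1 | (exfalso; omega) | (exfalso; tauto)
  have hmin1 : C.submatrix (Fin.castLE (by omega : j+1 ≤ j+2)) (Fin.castLE (by omega)) =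
      M.submatrix (Fin.castLE (by omega : j+1 ≤ n1+n2)) (Fin.castLE (by omega)) -
        lam • (1 : Matrix (Fin (j+1)) (Fin (j+1)) ℝ) := by
    ext a b
    simp [hC, hM, twoSegMatrix, Matrix.one_apply, Fin.ext_iff]
  have hmin0 : C.submatrix (Fin.castLE (by omega : j ≤ j+2)) (Fin.castLE (by omega)) =
      M.submatrix (Fin.castLE (by omega : j ≤ n1+n2)) (Fin.castLE (by omega)) -
        lam • (1 : Matrix (Fin j) (Fin j) ℝ) := by
    ext a b
    simp [hC, hM, twoSegMatrix, Matrix.one_apply, Fin.ext_iff]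
  rw [psiTop_of_le _ _ _ _ hj, psiTop_of_le _ _ _ _ (by omega : j + 1 ≤ n1 + n2),
    psiTop_of_le _ _ _ _ (by omega : j ≤ n1 + n2)]
  rw [← hC] at *
  rw [hdet, hC22, hC21, hC12, hmin1, hmin0]
  ring

lemma closedForm (ξ1 ξ2 : ℝ) (hξ1 : ξ1 ≠ 0) (hξ2 : 0 < ξ2) (n1 n2 : ℕ) (hn1 : 1 ≤ n1)
    (k : ℝ) :
    ∀ m, m ≤ n2 →
      Real.sin k * psiTop (twoSegMatrix ξ1 ξ2 n1 n2) ξ2 ((4 / ξ2) * Real.sin (k / 2) ^ 2) (n1 + m)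
        = (psiTop (twoSegMatrix ξ1 ξ2 n1 n2) ξ2 ((4 / ξ2) * Real.sin (k / 2) ^ 2) n1 * Real.cos k
            - (ξ2 / ξ1) * psiTop (twoSegMatrix ξ1 ξ2 n1 n2) ξ2 ((4 / ξ2) * Real.sin (k / 2) ^ 2) (n1 - 1))
            * Real.sin (m * k)
          + psiTop (twoSegMatrix ξ1 ξ2 n1 n2) ξ2 ((4 / ξ2) * Real.sin (k / 2) ^ 2) n1
            * Real.sin k * Real.cos (m * k) := by
  set lam := (4 / ξ2) * Real.sin (k / 2) ^ 2 with hlam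
  set P := psiTop (twoSegMatrix ξ1 ξ2 n1 n2) ξ2 lam with hP
  have hcosk : ξ2 * (2 / ξ2 - lam) = 2 * Real.cos k := by
    have h1 : Real.cos k = 1 - 2 * Real.sin (k / 2) ^ 2 := by
      have h2 := Real.cos_two_mul' (k / 2)
      have h3 := Real.sin_sq_add_cos_sq (k / 2)
      rw [show 2 * (k / 2) = k by ring] at h2
      linarith
    field_simp [hlam]
    have hl : ξ2 * lam = 4 * Real.sin (k / 2) ^ 2 := by rw [hlam]; field_simp
    linarith [mul_comm ξ2 (Real.cos k)]
  intro m
  induction m using Nat.strong_induction_on with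
  | _ m ih =>
    match m with
    | 0 =>
      intro _
      simp only [Nat.add_zero, Nat.cast_zero, zero_mul, Real.sin_zero, Real.cos_zero, mul_zero, zero_add, mul_one]
      ring
    | 1 =>
      intro hm
      have hrec := psiTop_rec ξ1 ξ2 lam n1 n2 (n1 - 1) (by omega) (by omega)
      rw [show n1 - 1 + 2 = n1 + 1 by omega, show n1 - 1 + 1 = n1 by omega,
        if_pos (by omega : n1 - 1 < n1), hcosk] at hrec
      rw [← hP] at hrec
      rw [hrec, div_self (ne_of_gt hξ2)]
      push_cast
      rw [one_mul]
      ring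
    | (m + 2) =>
      intro hm
      have h1 := ih (m + 1) (by omega) (by omega)
      have h0 := ih m (by omega) (by omega)
      have hrec := psiTop_rec ξ1 ξ2 lam n1 n2 (n1 + m) (by omega) (by omega)
      rw [show n1 + m + 2 = n1 + (m + 2) by omega, show n1 + m + 1 = n1 + (m + 1) by omega,
        if_neg (by omega : ¬ n1 + m < n1), hcosk, div_self (ne_of_gt hξ2)] at hrec
      rw [← hP] at hrec
      have e2 : ((m : ℝ) + 2) * k = ((m : ℝ) + 1) * k + k := by ring
      have e1 : ((m : ℝ) + 1) * k = (m : ℝ) * k + k := by ring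
      have pyth := Real.sin_sq_add_cos_sq k
      push_cast
      push_cast at h1 h0
      rw [e2, Real.sin_add, Real.cos_add, e1, Real.sin_add, Real.cos_add]
      rw [e1, Real.sin_add, Real.cos_add] at h1
      rw [hrec]
      linear_combination (2 * Real.cos k) * h1 - h0 +
        ((P n1 * Real.cos k - ξ2 / ξ1 * P (n1 - 1)) * Real.sin ((m : ℝ) * k)
          + P n1 * Real.sin k * Real.cos ((m : ℝ) * k)) * pyth

theorem twoSeg_eigenvalue_iff (ξ1 ξ2 : ℝ) (hξ1 : 0 < ξ1) (hξ2 : 0 < ξ2)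
    (n1 n2 : ℕ) (hn1 : 2 ≤ n1) (hn2 : 2 ≤ n2) (k : ℝ) (hk : k ∈ Set.Ioo 0 π) :
    let lam := (4 / ξ2) * Real.sin (k / 2) ^ 2
    let M := twoSegMatrix ξ1 ξ2 n1 n2
    let A := psiTop M ξ2 lam n1 - (ξ2 / ξ1) * Real.cos k * psiTop M ξ2 lam (n1 - 1)
    let B := (ξ2 / ξ1) * psiTop M ξ2 lam (n1 - 1)
    lam ∈ spectrum ℝ M ↔
      A * Real.sin ((n2 + 1) * k) + B * Real.sin k * Real.cos ((n2 + 1) * k) = 0 := by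
  intro lam M A B
  have hsin : 0 < Real.sin k := Real.sin_pos_of_pos_of_lt_pi hk.1 hk.2
  -- spectrum membership ↔ det (M - lam • 1) = 0
  have hspec : lam ∈ spectrum ℝ M ↔ (M - lam • (1 : Matrix (Fin (n1+n2)) (Fin (n1+n2)) ℝ)).det = 0 := by
    rw [spectrum.mem_iff, Algebra.algebraMap_eq_smul_one, Matrix.isUnit_iff_isUnit_det,
      isUnit_iff_ne_zero, not_not]
    have hneg : lam • (1 : Matrix (Fin (n1+n2)) (Fin (n1+n2)) ℝ) - M
        = - (M - lam • 1) := (neg_sub M (lam • 1)).symm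
    rw [hneg, Matrix.det_neg]
    constructor
    · intro h
      rcases mul_eq_zero.mp h with h' | h'
      · exact absurd h' (pow_ne_zero _ (by norm_num))
      · exact h'
    · intro h; rw [h, mul_zero]
  -- psiTop at N equals ξ2^N * det(M - lam • 1)
  have hPN : psiTop M ξ2 lam (n1 + n2) = ξ2 ^ (n1+n2) *
      (M - lam • (1 : Matrix (Fin (n1+n2)) (Fin (n1+n2)) ℝ)).det := by
    rw [psiTop_of_le _ _ _ _ (le_refl (n1+n2))]
    have hsub : M.submatrix (Fin.castLE (le_refl (n1+n2))) (Fin.castLE (le_refl (n1+n2))) = M := by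
      ext i j; rfl
    rw [hsub]
  have hcf := closedForm ξ1 ξ2 (ne_of_gt hξ1) hξ2 n1 n2 (by omega) k n2 le_rfl
  have hkey : A * Real.sin ((n2 + 1) * k) + B * Real.sin k * Real.cos ((n2 + 1) * k)
      = Real.sin k * psiTop M ξ2 lam (n1 + n2) := by
    have e1 : ((n2 : ℝ) + 1) * k = (n2 : ℝ) * k + k := by ring
    have pyth := Real.sin_sq_add_cos_sq k
    push_cast
    rw [e1, Real.sin_add, Real.cos_add]
    simp only [A, B, M, lam] at *
    linear_combination -hcf -
      ((ξ2 / ξ1) * psiTop (twoSegMatrix ξ1 ξ2 n1 n2) ξ2 ((4 / ξ2) * Real.sin (k / 2) ^ 2) (n1 - 1)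
        * Real.sin ((n2 : ℝ) * k)) * pyth
  rw [hspec, hkey, hPN]
  constructor
  · intro h; rw [h]; simp
  · intro h
    rcases mul_eq_zero.mp h with h' | h'
    · exact absurd h' (ne_of_gt hsin)
    · rcases mul_eq_zero.mp h' with h'' | h''
      · exact absurd h'' (pow_ne_zero _ (ne_of_gt hξ2))
      · exact h''
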